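/- Let T be a tree on |V| vertices with geodesic distance (Wiener index) S, let m ≥ 1, and for t ≥ 0 let T(t,m) be the exponential tree obtained from T after t steps. Then T(t,m) has (m+1)^t·|V| vertices, and its geodesic distance equals (1+m)^{2t}·S + m(m+1)·∑_{i=0}^{t−1} (1+m)^{2i}·((m+1)^{t−i−1}·|V|)² − m·∑_{i=0}^{t−1} (1+m)^{2i}·(m+1)^{t−i−1}·|V|. -/

import Mathlib

/-- A finite simple graph, bundled with its (finite) vertex type. -/
structure FinSimpleGraph where
  V : Type
  fV : Fintype V
  G : SimpleGraph V

attribute [instance] FinSimpleGraph.fV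

/-- The geodesic distance (Wiener index) of a finite simple graph: the sum of the graph
distances over all unordered pairs of distinct vertices. -/
noncomputable def wienerIndex {V : Type} [Fintype V] (G : SimpleGraph V) : ℕ :=
  (∑ u : V, ∑ v : V, G.dist u v) / 2

/-- One step of the exponential-tree construction: attach `m` new leaf vertices to every
vertex.  The new vertex set is `V ⊕ (V × Fin m)`, where `(v, j)` is adjacent exactly to
`v`, and the adjacency on the `V` component is unchanged. -/
def expTreeStep (m : ℕ) (X : FinSimpleGraph) : FinSimpleGraph :=
  { V := X.V ⊕ (X.V × Fin m), fV := inferInstance,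
    G := SimpleGraph.fromRel fun a b =>
      match a, b with
      | Sum.inl u, Sum.inl v => X.G.Adj u v
      | Sum.inl u, Sum.inr (v, _) => u = v
      | _, _ => False }

/-- The exponential tree `T(t,m)` obtained from the seed after `t` steps. -/
def expTreeIter (m : ℕ) (X : FinSimpleGraph) : ℕ → FinSimpleGraph
  | 0 => X
  | t + 1 => expTreeStep m (expTreeIter m X t)

open SimpleGraph Sum

/-- Sum of a symmetric function with zero diagonal is even. -/
lemma even_double_sum {V : Type} (f : V → V → ℕ) (hs : ∀ u v, f u v = f v u)
    (hd : ∀ u, f u u = 0) (s : Finset V) : Even (∑ u ∈ s, ∑ v ∈ s, f u v) := by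
  classical
  induction s using Finset.induction_on with
  | empty => simp
  | @insert a s ha ih =>
    rw [Finset.sum_insert ha, Finset.sum_insert ha, hd a]
    have h2 : ∑ u ∈ s, ∑ v ∈ insert a s, f u v
        = (∑ u ∈ s, f u a) + ∑ u ∈ s, ∑ v ∈ s, f u v := by
      rw [← Finset.sum_add_distrib]
      exact Finset.sum_congr rfl fun u _ => by rw [Finset.sum_insert ha]
    rw [h2]
    have h1 : ∑ u ∈ s, f u a = ∑ v ∈ s, f a v := Finset.sum_congr rfl fun u _ => hs u a
    obtain ⟨k, hk⟩ := ih
    exact ⟨(∑ v ∈ s, f a v) + k, by omega⟩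

lemma even_distsum {V : Type} [Fintype V] (G : SimpleGraph V) :
    Even (∑ u : V, ∑ v : V, G.dist u v) :=
  even_double_sum _ (fun _ _ => G.dist_comm) (fun _ => G.dist_self) Finset.univ

lemma wiener_two {V : Type} [Fintype V] (G : SimpleGraph V) :
    (wienerIndex G : ℤ) * 2 = ∑ u : V, ∑ v : V, (G.dist u v : ℤ) := by
  have h := Nat.div_mul_cancel (even_distsum G).two_dvd
  have := congrArg (fun n : ℕ => (n : ℤ)) h
  push_cast at this
  simpa [wienerIndex] using this

/-- Distance to a pendant vertex. -/
lemma dist_pendant {W : Type} {H : SimpleGraph W} (hc : H.Connected) {w x : W}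
    (hadj : H.Adj x w) (huniq : ∀ y, H.Adj y w → y = x) {a : W} (ha : a ≠ w) :
    H.dist a w = H.dist a x + 1 := by
  refine le_antisymm ?_ ?_
  · calc H.dist a w ≤ H.dist a x + H.dist x w := hc.dist_triangle
      _ = H.dist a x + 1 := by rw [SimpleGraph.dist_eq_one_iff_adj.mpr hadj]
  · obtain ⟨p, hp⟩ := hc.exists_walk_length_eq_dist a w
    have hql : p.reverse.length = H.dist a w := by rw [SimpleGraph.Walk.length_reverse, hp]
    generalize hq : p.reverse = q at hql
    cases q with
    | nil => exact absurd rfl ha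
    | @cons _ c _ h q' =>
      have hcx : c = x := huniq c h.symm
      have h1 : H.dist a x ≤ q'.length := by
        rw [← hcx, SimpleGraph.dist_comm]; exact SimpleGraph.dist_le q'
      rw [SimpleGraph.Walk.length_cons] at hql
      omega

variable {m : ℕ} {X : FinSimpleGraph}

lemma adj_inl_inl {u v : X.V} :
    (expTreeStep m X).G.Adj (Sum.inl u) (Sum.inl v) ↔ X.G.Adj u v := by
  constructor
  · rintro ⟨hne, h | h⟩
    · exact h
    · exact h.symm
  · intro h
    exact ⟨by simp [h.ne], Or.inl h⟩

lemma adj_inl_inr {u v : X.V} {j : Fin m} :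
    (expTreeStep m X).G.Adj (Sum.inl u) (Sum.inr (v, j)) ↔ u = v := by
  constructor
  · rintro ⟨hne, h | h⟩
    · exact h
    · exact h.elim
  · intro h
    exact ⟨by simp, Or.inl h⟩

lemma not_adj_inr_inr {p q : X.V × Fin m} :
    ¬ (expTreeStep m X).G.Adj (Sum.inr p) (Sum.inr q) := by
  rintro ⟨hne, h | h⟩ <;> exact h

/-- The inclusion of the old vertices as a graph homomorphism. -/
def inlHom (m : ℕ) (X : FinSimpleGraph) : X.G →g (expTreeStep m X).G :=
  ⟨Sum.inl, fun h => adj_inl_inl.mpr h⟩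

def prj : X.V ⊕ (X.V × Fin m) → X.V := Sum.elim id Prod.fst

lemma prj_dist_le (hc : X.G.Connected) {a b : X.V ⊕ (X.V × Fin m)}
    (p : (expTreeStep m X).G.Walk a b) : X.G.dist (prj a) (prj b) ≤ p.length := by
  induction p with
  | nil => simp
  | @cons a c b h q ih =>
    have h1 : X.G.dist (prj a) (prj c) ≤ 1 := by
      match a, c with
      | Sum.inl u, Sum.inl v =>
        exact le_of_eq (SimpleGraph.dist_eq_one_iff_adj.mpr (adj_inl_inl.mp h))
      | Sum.inl u, Sum.inr (v, j) =>
        have : u = v := adj_inl_inr.mp h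
        simp [prj, this, SimpleGraph.dist_self]
      | Sum.inr (u, i), Sum.inl v =>
        have : v = u := adj_inl_inr.mp h.symm
        simp [prj, this, SimpleGraph.dist_self]
      | Sum.inr p, Sum.inr q => exact absurd h not_adj_inr_inr
    calc X.G.dist (prj a) (prj b) ≤ X.G.dist (prj a) (prj c) + X.G.dist (prj c) (prj b) :=
          hc.dist_triangle
      _ ≤ 1 + q.length := add_le_add h1 ih
      _ = (SimpleGraph.Walk.cons h q).length := by change 1 + q.length = q.length + 1; omega

lemma step_connected (hc : X.G.Connected) : (expTreeStep m X).G.Connected := by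
  have key : ∀ a : X.V ⊕ (X.V × Fin m),
      (expTreeStep m X).G.Reachable (Sum.inl (prj a)) a := by
    rintro (u | ⟨u, i⟩)
    · exact SimpleGraph.Reachable.refl _
    · exact (adj_inl_inr.mpr rfl).reachable
  have hinl : ∀ u v : X.V,
      (expTreeStep m X).G.Reachable (Sum.inl u) (Sum.inl v) := fun u v =>
    (hc.preconnected u v).map (inlHom m X)
  haveI : Nonempty (expTreeStep m X).V := ⟨Sum.inl hc.nonempty.some⟩
  exact ⟨fun a b => ((key a).symm.trans (hinl (prj a) (prj b))).trans (key b)⟩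

lemma dist_inl_inl (hc : X.G.Connected) (u v : X.V) :
    (expTreeStep m X).G.dist (Sum.inl u) (Sum.inl v) = X.G.dist u v := by
  refine le_antisymm ?_ ?_
  · obtain ⟨p, hp⟩ := hc.exists_walk_length_eq_dist u v
    calc (expTreeStep m X).G.dist (Sum.inl u) (Sum.inl v) ≤ (p.map (inlHom m X)).length :=
          SimpleGraph.dist_le _
      _ = X.G.dist u v := by rw [SimpleGraph.Walk.length_map, hp]
  · obtain ⟨p, hp⟩ := (step_connected hc).exists_walk_length_eq_dist (Sum.inl u) (Sum.inl v)
    have := prj_dist_le hc p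
    simpa [prj, hp] using this

lemma dist_inl_inr (hc : X.G.Connected) (u v : X.V) (j : Fin m) :
    (expTreeStep m X).G.dist (Sum.inl u) (Sum.inr (v, j)) = X.G.dist u v + 1 := by
  have h := dist_pendant (H := (expTreeStep m X).G) (step_connected hc)
    (w := Sum.inr (v, j)) (x := Sum.inl v) (adj_inl_inr.mpr rfl)
    (fun y hy => by
      match y with
      | Sum.inl w => exact congrArg Sum.inl (adj_inl_inr.mp hy)
      | Sum.inr p => exact absurd hy not_adj_inr_inr)
    (a := Sum.inl u) Sum.inl_ne_inr
  rw [h, dist_inl_inl hc]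

lemma dist_inr_inr (hc : X.G.Connected) (u v : X.V) (i j : Fin m)
    (hne : (u, i) ≠ (v, j)) :
    (expTreeStep m X).G.dist (Sum.inr (u, i)) (Sum.inr (v, j)) = X.G.dist u v + 2 := by
  have h := dist_pendant (H := (expTreeStep m X).G) (step_connected hc)
    (w := Sum.inr (v, j)) (x := Sum.inl v) (adj_inl_inr.mpr rfl)
    (fun y hy => by
      match y with
      | Sum.inl w => exact congrArg Sum.inl (adj_inl_inr.mp hy)
      | Sum.inr p => exact absurd hy not_adj_inr_inr)
    (a := Sum.inr (u, i)) (fun h => hne (Sum.inr.inj h))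
  rw [h]
  have e := (SimpleGraph.dist_comm (G := (expTreeStep m X).G)).trans (dist_inl_inr hc v u i)
  have : X.G.dist u v = X.G.dist v u := SimpleGraph.dist_comm
  omega

lemma dist_inr_inl (hc : X.G.Connected) (u : X.V) (i : Fin m) (v : X.V) :
    (expTreeStep m X).G.dist (Sum.inr (u, i)) (Sum.inl v) = X.G.dist u v + 1 := by
  have e := (SimpleGraph.dist_comm (G := (expTreeStep m X).G)).trans (dist_inl_inr hc v u i)
  have : X.G.dist u v = X.G.dist v u := SimpleGraph.dist_comm
  omega

lemma step_sum (hc : X.G.Connected) :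
    (∑ a : (expTreeStep m X).V, ∑ b : (expTreeStep m X).V,
        ((expTreeStep m X).G.dist a b : ℤ))
      = (1 + (m : ℤ))^2 * (∑ u : X.V, ∑ v : X.V, (X.G.dist u v : ℤ))
        + 2 * (m : ℤ) * ((m : ℤ) + 1) * (Fintype.card X.V : ℤ)^2
        - 2 * (m : ℤ) * (Fintype.card X.V : ℤ) := by
  classical
  have h1 : ∀ u v : X.V,
      (((expTreeStep m X).G.dist (Sum.inl u) (Sum.inl v) : ℕ) : ℤ) = (X.G.dist u v : ℤ) :=
    fun u v => by rw [dist_inl_inl hc]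
  have h2 : ∀ (u v : X.V) (j : Fin m),
      (((expTreeStep m X).G.dist (Sum.inl u) (Sum.inr (v, j)) : ℕ) : ℤ)
        = (X.G.dist u v : ℤ) + 1 :=
    fun u v j => by rw [dist_inl_inr hc]; push_cast; ring
  have h3 : ∀ (u : X.V) (i : Fin m) (v : X.V),
      (((expTreeStep m X).G.dist (Sum.inr (u, i)) (Sum.inl v) : ℕ) : ℤ)
        = (X.G.dist u v : ℤ) + 1 :=
    fun u i v => by rw [dist_inr_inl hc]; push_cast; ring
  have h4 : ∀ (u : X.V) (i : Fin m) (v : X.V) (j : Fin m),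
      (((expTreeStep m X).G.dist (Sum.inr (u, i)) (Sum.inr (v, j)) : ℕ) : ℤ)
        = (X.G.dist u v : ℤ) + 2 - (if i = j then (if u = v then (2:ℤ) else 0) else 0) := by
    intro u i v j
    by_cases h : (u, i) = (v, j)
    · obtain ⟨rfl, rfl⟩ := Prod.mk.injEq .. ▸ h
      · simp [SimpleGraph.dist_self]; exact SimpleGraph.dist_self
    · rw [dist_inr_inr hc u v i j h]
      have hnn : ¬ (u = v ∧ i = j) := by
        rintro ⟨rfl, rfl⟩; exact h rfl
      by_cases hij : i = j
      · have huv : ¬ u = v := fun huv => hnn ⟨huv, hij⟩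
        simp [hij, huv]
      · simp [hij]
  show (∑ a : X.V ⊕ X.V × Fin m, ∑ b : X.V ⊕ X.V × Fin m,
      ((expTreeStep m X).G.dist a b : ℤ)) = _
  simp only [Fintype.sum_sum_type, Fintype.sum_prod_type, h1, h2, h3, h4]
  simp only [Finset.sum_sub_distrib, Finset.sum_add_distrib, Finset.sum_const,
    Finset.card_univ, Fintype.card_fin, nsmul_eq_mul, Finset.sum_ite_eq,
    Finset.mem_univ, if_true]
  simp only [← Finset.mul_sum]
  push_cast
  ring

lemma step_card : Fintype.card (expTreeStep m X).V = (m + 1) * Fintype.card X.V := by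
  show Fintype.card (X.V ⊕ X.V × Fin m) = _
  simp [Fintype.card_sum, Fintype.card_prod, Fintype.card_fin]
  ring

lemma step_wiener (hc : X.G.Connected) :
    (wienerIndex (expTreeStep m X).G : ℤ) =
      (1 + (m : ℤ))^2 * (wienerIndex X.G : ℤ)
        + (m : ℤ) * ((m : ℤ) + 1) * (Fintype.card X.V : ℤ)^2
        - (m : ℤ) * (Fintype.card X.V : ℤ) := by
  have h := wiener_two (expTreeStep m X).G
  rw [step_sum hc, ← wiener_two X.G] at h
  linarith

/-- For a tree `T` on `|V|` vertices with Wiener index `S` and `m ≥ 1`, the exponential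
tree `T(t,m)` has `(m+1)^t·|V|` vertices, and its Wiener index equals
`(1+m)^{2t}·S + m(m+1)·∑_{i=0}^{t−1} (1+m)^{2i}·((m+1)^{t−i−1}·|V|)²
 − m·∑_{i=0}^{t−1} (1+m)^{2i}·(m+1)^{t−i−1}·|V|`. -/
theorem wiener_expTreeIter {V : Type} [Fintype V] (G : SimpleGraph V) (hG : G.IsTree)
    (m : ℕ) (hm : 1 ≤ m) (t : ℕ) :
    Fintype.card (expTreeIter m ⟨V, inferInstance, G⟩ t).V =
        (m + 1) ^ t * Fintype.card V ∧
    (wienerIndex (expTreeIter m ⟨V, inferInstance, G⟩ t).G : ℤ) =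
      (1 + (m : ℤ)) ^ (2 * t) * (wienerIndex G : ℤ)
        + (m : ℤ) * ((m : ℤ) + 1) *
            ∑ i ∈ Finset.range t,
              (1 + (m : ℤ)) ^ (2 * i) * (((m : ℤ) + 1) ^ (t - i - 1) * (Fintype.card V : ℤ)) ^ 2
        - (m : ℤ) *
            ∑ i ∈ Finset.range t,
              (1 + (m : ℤ)) ^ (2 * i) * (((m : ℤ) + 1) ^ (t - i - 1) * (Fintype.card V : ℤ)) := by
  set X₀ : FinSimpleGraph := ⟨V, inferInstance, G⟩ with hX₀
  suffices h : ∀ s : ℕ, (expTreeIter m X₀ s).G.Connected ∧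
      Fintype.card (expTreeIter m X₀ s).V = (m + 1) ^ s * Fintype.card V ∧
      (wienerIndex (expTreeIter m X₀ s).G : ℤ) =
        (1 + (m : ℤ)) ^ (2 * s) * (wienerIndex G : ℤ)
          + (m : ℤ) * ((m : ℤ) + 1) *
              ∑ i ∈ Finset.range s,
                (1 + (m : ℤ)) ^ (2 * i) * (((m : ℤ) + 1) ^ (s - i - 1) * (Fintype.card V : ℤ)) ^ 2
          - (m : ℤ) *
              ∑ i ∈ Finset.range s,
                (1 + (m : ℤ)) ^ (2 * i) * (((m : ℤ) + 1) ^ (s - i - 1) * (Fintype.card V : ℤ)) by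
    exact ⟨(h t).2.1, (h t).2.2⟩
  intro s
  induction s with
  | zero => exact ⟨hG.isConnected, by simp [expTreeIter]; rfl, by simp [expTreeIter]; rfl⟩
  | succ s ih =>
    obtain ⟨hc, hcard, hw⟩ := ih
    refine ⟨step_connected hc, ?_, ?_⟩
    · show Fintype.card (expTreeStep m (expTreeIter m X₀ s)).V = _
      rw [step_card, hcard]
      ring
    · show (wienerIndex (expTreeStep m (expTreeIter m X₀ s)).G : ℤ) = _
      rw [step_wiener hc, hw, hcard]
      rw [Finset.sum_range_succ' (fun i =>
        (1 + (m : ℤ)) ^ (2 * i) * (((m : ℤ) + 1) ^ (s + 1 - i - 1) * (Fintype.card V : ℤ)) ^ 2)]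
      rw [Finset.sum_range_succ' (fun i =>
        (1 + (m : ℤ)) ^ (2 * i) * (((m : ℤ) + 1) ^ (s + 1 - i - 1) * (Fintype.card V : ℤ)))]
      have e1 : ∀ i ∈ Finset.range s,
          (1 + (m : ℤ)) ^ (2 * (i + 1)) * (((m : ℤ) + 1) ^ (s + 1 - (i + 1) - 1) * (Fintype.card V : ℤ)) ^ 2
            = (1 + (m : ℤ)) ^ 2 *
              ((1 + (m : ℤ)) ^ (2 * i) * (((m : ℤ) + 1) ^ (s - i - 1) * (Fintype.card V : ℤ)) ^ 2) := by
        intro i _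
        rw [Nat.succ_sub_succ]
        ring
      have e2 : ∀ i ∈ Finset.range s,
          (1 + (m : ℤ)) ^ (2 * (i + 1)) * (((m : ℤ) + 1) ^ (s + 1 - (i + 1) - 1) * (Fintype.card V : ℤ))
            = (1 + (m : ℤ)) ^ 2 *
              ((1 + (m : ℤ)) ^ (2 * i) * (((m : ℤ) + 1) ^ (s - i - 1) * (Fintype.card V : ℤ))) := by
        intro i _
        rw [Nat.succ_sub_succ]
        ring
      rw [Finset.sum_congr rfl e1, Finset.sum_congr rfl e2, ← Finset.mul_sum, ← Finset.mul_sum]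
      simp only [Nat.add_sub_cancel, Nat.sub_zero, mul_zero, pow_zero, one_mul]
      push_cast
      ring
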